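/- A graph with a perfect matching is Egerváry if and only if it does not contain an even subdivision of T as a nice subgraph. -/

import Mathlib

open SimpleGraph

variable {V : Type*}

/-- A graph has a perfect matching. -/
def HasPM (G : SimpleGraph V) : Prop := ∃ M : G.Subgraph, M.IsPerfectMatching

/-- A set of vertices is independent (pairwise nonadjacent). -/
def IsIndep (G : SimpleGraph V) (s : Set V) : Prop := ∀ x ∈ s, ∀ y ∈ s, ¬ G.Adj x y

/-- The independence number. -/
noncomputable def alphaNum (G : SimpleGraph V) : ℕ :=
  sSup {n | ∃ s : Set V, IsIndep G s ∧ s.ncard = n}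

/-- The matching number. -/
noncomputable def matchNum (G : SimpleGraph V) : ℕ :=
  sSup {n | ∃ M : G.Subgraph, M.IsMatching ∧ M.edgeSet.ncard = n}

/-- A graph is König-Egerváry if α + ν = n. -/
def IsKE (G : SimpleGraph V) : Prop := alphaNum G + matchNum G = Nat.card V

/-- `G` is (the whole graph) an even subdivision of `K₄`: four corner vertices and six
internally disjoint odd paths joining each pair of corners, comprising all vertices
and edges of `G`. -/
def IsEvenSubdivK4 (G : SimpleGraph V) : Prop :=
  ∃ (c : Fin 4 → V) (P : ∀ i j : Fin 4, G.Walk (c i) (c j)),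
    Function.Injective c ∧
    (∀ i j : Fin 4, P j i = (P i j).reverse) ∧
    (∀ i j : Fin 4, i ≠ j → (P i j).IsPath ∧ Odd (P i j).length) ∧
    (∀ i j k l : Fin 4, i ≠ j → k ≠ l → ¬(i = k ∧ j = l) → ¬(i = l ∧ j = k) →
      ∀ x : V, x ∈ (P i j).support → x ∈ (P k l).support → x ∈ Set.range c) ∧
    (∀ x : V, ∃ i j : Fin 4, i ≠ j ∧ x ∈ (P i j).support) ∧
    (∀ e : Sym2 V, e ∈ G.edgeSet ↔ ∃ i j : Fin 4, i ≠ j ∧ e ∈ (P i j).edges)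

/-- `G` is (the whole graph) an even subdivision of `T`: two vertex-disjoint odd cycles
joined at blossom tips `v`, `w` by an odd path internally disjoint from the cycles,
comprising all vertices and edges of `G`. -/
def IsEvenSubdivT (G : SimpleGraph V) : Prop :=
  ∃ (v w : V) (C1 : G.Walk v v) (C2 : G.Walk w w) (P : G.Walk v w),
    C1.IsCycle ∧ C2.IsCycle ∧ Odd C1.length ∧ Odd C2.length ∧
    P.IsPath ∧ Odd P.length ∧
    (∀ x : V, x ∈ C1.support → x ∉ C2.support) ∧
    (∀ x : V, x ∈ P.support → x ∈ C1.support → x = v) ∧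
    (∀ x : V, x ∈ P.support → x ∈ C2.support → x = w) ∧
    (∀ x : V, x ∈ C1.support ∨ x ∈ C2.support ∨ x ∈ P.support) ∧
    (∀ e : Sym2 V, e ∈ G.edgeSet ↔ e ∈ C1.edges ∨ e ∈ C2.edges ∨ e ∈ P.edges)

/-- `G` contains a nice even subdivision of `T`: a subgraph `H` which is an even
subdivision of `T` and such that `G - V(H)` has a perfect matching. -/
def HasNiceEvenSubdivT (G : SimpleGraph V) : Prop :=
  ∃ H : G.Subgraph, IsEvenSubdivT H.coe ∧ HasPM (G.induce (H.vertsᶜ))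

/-- `G` has a spanning subgraph whose components are independent edges together with a
positive number of vertex-disjoint odd cycles. -/
def HasOddCycleCover (G : SimpleGraph V) : Prop :=
  ∃ (M : G.Subgraph) (k : ℕ) (u : Fin k → V) (C : ∀ i : Fin k, G.Walk (u i) (u i)),
    0 < k ∧ M.IsMatching ∧
    (∀ i, (C i).IsCycle ∧ Odd (C i).length) ∧
    (∀ i j, i ≠ j → ∀ x : V, x ∈ (C i).support → x ∉ (C j).support) ∧
    (∀ i, ∀ x ∈ (C i).support, x ∉ M.verts) ∧
    (∀ x : V, x ∈ M.verts ∨ ∃ i, x ∈ (C i).support)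

/-- A matchable graph is Egerváry iff it has no such spanning cover. -/
def IsEgervary (G : SimpleGraph V) : Prop := ¬ HasOddCycleCover G

/-- `G` contains two vertex-disjoint odd cycles. -/
def TwoDisjointOddCycles (G : SimpleGraph V) : Prop :=
  ∃ (a b : V) (C1 : G.Walk a a) (C2 : G.Walk b b),
    C1.IsCycle ∧ C2.IsCycle ∧ Odd C1.length ∧ Odd C2.length ∧
    ∀ x : V, x ∈ C1.support → x ∉ C2.support

/-- `G` is α-critical: deleting any edge increases the independence number. -/
def AlphaCritical (G : SimpleGraph V) : Prop :=
  ∀ e ∈ G.edgeSet, alphaNum (G.deleteEdges {e}) = alphaNum G + 1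

/-- The (open) neighborhood of a set of vertices. -/
def setN (G : SimpleGraph V) (I : Set V) : Set V := {x | x ∉ I ∧ ∃ y ∈ I, G.Adj x y}

namespace EgAux
variable {G : SimpleGraph V}


open scoped Classical in
/-- Partner function of a subgraph (partner of a matched vertex, identity elsewhere). -/
noncomputable def partner (M : G.Subgraph) (x : V) : V :=
  if h : ∃ y, M.Adj x y then h.choose else x

lemma partner_adj {M : G.Subgraph} {x : V} (hx : x ∈ M.verts) (hM : M.IsMatching) :
    M.Adj x (partner M x) := by
  classical
  obtain ⟨y, hy, -⟩ := hM hx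
  have h : ∃ y, M.Adj x y := ⟨y, hy⟩
  rw [partner]
  rw [dif_pos h]
  exact h.choose_spec

lemma partner_eq {M : G.Subgraph} {x y : V} (hM : M.IsMatching) (h : M.Adj x y) :
    partner M x = y := by
  obtain ⟨z, hz, huniq⟩ := hM (M.edge_vert h)
  have h1 := huniq _ (partner_adj (M.edge_vert h) hM)
  have h2 := huniq _ h
  rw [h1, h2]

lemma partner_of_not_mem {M : G.Subgraph} {x : V} (hx : x ∉ M.verts) : partner M x = x := by
  classical
  rw [partner]
  rw [dif_neg]
  rintro ⟨y, hy⟩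
  exact hx (M.edge_vert hy)

lemma partner_mem {M : G.Subgraph} {x : V} (hx : x ∈ M.verts) (hM : M.IsMatching) :
    partner M x ∈ M.verts := M.edge_vert (partner_adj hx hM).symm

lemma partner_invol {M : G.Subgraph} (hM : M.IsMatching) (x : V) :
    partner M (partner M x) = x := by
  by_cases hx : x ∈ M.verts
  · exact partner_eq hM (partner_adj hx hM).symm
  · rw [partner_of_not_mem hx, partner_of_not_mem hx]

lemma partner_ne {M : G.Subgraph} {x : V} (hx : x ∈ M.verts) (hM : M.IsMatching) :
    partner M x ≠ x := by
  have h2 := partner_adj hx hM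
  intro h
  rw [h] at h2
  exact G.loopless.irrefl x (M.adj_sub h2)

/-- Deleting a partner-closed set of vertices from a matching yields a matching. -/
lemma isMatching_deleteVerts {M : G.Subgraph} (hM : M.IsMatching) {s : Set V}
    (hs : ∀ x ∈ s, ∀ y, M.Adj x y → y ∈ s) : (M.deleteVerts s).IsMatching := by
  intro v hv
  rw [Subgraph.deleteVerts_verts] at hv
  obtain ⟨w, hw, huniq⟩ := hM hv.1
  have hwv : w ∈ M.verts := M.edge_vert hw.symm
  have hws : w ∉ s := fun hws => hv.2 (hs _ hws _ hw.symm)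
  refine ⟨w, Subgraph.deleteVerts_adj.mpr ⟨hv.1, hv.2, hwv, hws, hw⟩, ?_⟩
  intro y hy
  rw [Subgraph.deleteVerts_adj] at hy
  exact huniq y hy.2.2.2.2



/-- An even path has a matching covering all vertices except the final one. -/
lemma exists_matching_even_path :
    ∀ (n : ℕ) {a b : V} (p : G.Walk a b), p.length ≤ n → p.IsPath → Even p.length →
    ∃ M : G.Subgraph, M.IsMatching ∧ M.verts = {x | x ∈ p.support ∧ x ≠ b} := by
  intro n
  induction n with
  | zero =>
    intro a b p hl hp he
    cases p with
    | nil =>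
      refine ⟨⊥, fun v hv => by simp at hv, ?_⟩
      ext x
      simp only [Subgraph.verts_bot, Set.mem_empty_iff_false, Set.mem_setOf_eq,
        Walk.support_nil, List.mem_singleton, false_iff]
      rintro ⟨rfl, hx⟩; exact hx rfl
    | cons h q => simp at hl
  | succ n ih =>
    intro a b p hl hp he
    cases p with
    | nil =>
      refine ⟨⊥, fun v hv => by simp at hv, ?_⟩
      ext x
      simp only [Subgraph.verts_bot, Set.mem_empty_iff_false, Set.mem_setOf_eq,
        Walk.support_nil, List.mem_singleton, false_iff]
      rintro ⟨rfl, hx⟩; exact hx rfl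
    | cons h1 q =>
      cases q with
      | nil => simp [Nat.even_add_one] at he
      | cons h2 r =>
        rename_i x1 x2
        have hr : r.IsPath := hp.of_cons.of_cons
        have hrl : r.length ≤ n := by
          simp only [Walk.length_cons] at hl; omega
        have hre : Even r.length := by
          simp only [Walk.length_cons] at he
          rcases he with ⟨m, hm⟩
          exact ⟨m - 1, by omega⟩
        obtain ⟨M, hM, hMv⟩ := ih r hrl hr hre
        have hnd := hp.support_nodup
        simp only [Walk.support_cons, List.nodup_cons, List.mem_cons] at hnd
        have hanr : a ∉ r.support := fun hx => hnd.1 (Or.inr hx)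
        have hx1nr : x1 ∉ r.support := hnd.2.1
        have hbr : b ∈ r.support := r.end_mem_support
        refine ⟨G.subgraphOfAdj h1 ⊔ M, ?_, ?_⟩
        · refine Subgraph.IsMatching.sup (Subgraph.IsMatching.subgraphOfAdj h1) hM ?_
          rw [support_subgraphOfAdj, hM.support_eq_verts, hMv, Set.disjoint_left]
          rintro x hx hx2
          simp only [Set.mem_insert_iff, Set.mem_singleton_iff] at hx
          rcases hx with rfl | rfl
          · exact hanr hx2.1
          · exact hx1nr hx2.1
        · rw [Subgraph.verts_sup, subgraphOfAdj_verts, hMv]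
          ext x
          simp only [Set.mem_union, Set.mem_insert_iff, Set.mem_singleton_iff, Set.mem_setOf_eq,
            Walk.support_cons, List.mem_cons]
          constructor
          · rintro ((rfl | rfl) | ⟨hx, hxb⟩)
            · exact ⟨Or.inl rfl, fun hab => hanr (hab ▸ hbr)⟩
            · exact ⟨Or.inr (Or.inl rfl), fun hab => hx1nr (hab ▸ hbr)⟩
            · exact ⟨Or.inr (Or.inr hx), hxb⟩
          · rintro ⟨(rfl | rfl | hx), hxb⟩
            · exact Or.inl (Or.inl rfl)
            · exact Or.inl (Or.inr rfl)
            · exact Or.inr ⟨hx, hxb⟩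

/-- An odd path has a perfect matching on its support. -/
lemma exists_matching_odd_path {a b : V} (p : G.Walk a b) (hp : p.IsPath)
    (ho : Odd p.length) :
    ∃ M : G.Subgraph, M.IsMatching ∧ M.verts = {x | x ∈ p.support} := by
  cases p with
  | nil => simp at ho
  | cons h q =>
    rename_i x1
    have hq : q.reverse.IsPath := hp.of_cons.reverse
    have hqe : Even q.reverse.length := by
      rw [Walk.length_reverse]
      simp only [Walk.length_cons] at ho
      rcases ho with ⟨m, hm⟩
      exact ⟨m, by omega⟩
    obtain ⟨M, hM, hMv⟩ := exists_matching_even_path q.reverse.length q.reverse le_rfl hq hqe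
    have hnd := hp.support_nodup
    simp only [Walk.support_cons, List.nodup_cons] at hnd
    have haq : a ∉ q.support := hnd.1
    refine ⟨G.subgraphOfAdj h ⊔ M, ?_, ?_⟩
    · refine Subgraph.IsMatching.sup (Subgraph.IsMatching.subgraphOfAdj h) hM ?_
      rw [support_subgraphOfAdj, hM.support_eq_verts, hMv, Set.disjoint_left]
      rintro x hx hx2
      rw [Set.mem_setOf_eq, Walk.support_reverse, List.mem_reverse] at hx2
      simp only [Set.mem_insert_iff, Set.mem_singleton_iff] at hx
      rcases hx with rfl | rfl
      · exact haq hx2.1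
      · exact hx2.2 rfl
    · rw [Subgraph.verts_sup, subgraphOfAdj_verts, hMv]
      ext x
      simp only [Set.mem_union, Set.mem_insert_iff, Set.mem_singleton_iff, Set.mem_setOf_eq,
        Walk.support_cons, List.mem_cons, Walk.support_reverse, List.mem_reverse]
      constructor
      · rintro ((rfl | rfl) | ⟨hx, hxb⟩)
        · exact Or.inl rfl
        · exact Or.inr q.start_mem_support
        · exact Or.inr hx
      · rintro (rfl | hx)
        · exact Or.inl (Or.inl rfl)
        · by_cases hx1 : x = x1
          · exact Or.inl (Or.inr hx1)
          · exact Or.inr ⟨hx, hx1⟩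

/-- A cycle has a near-perfect matching missing any designated vertex on it. -/
lemma exists_near_matching_cycle [DecidableEq V] {u v : V} (c : G.Walk u u) (hc : c.IsCycle)
    (ho : Odd c.length) (hv : v ∈ c.support) :
    ∃ M : G.Subgraph, M.IsMatching ∧ M.verts = {x | x ∈ c.support ∧ x ≠ v} := by
  have hc' : (c.rotate v hv).IsCycle := hc.rotate hv
  have hsup : ∀ x, (x ∈ (c.rotate v hv).support ↔ x ∈ c.support) := by
    intro x
    have hperm := c.support_rotate v hv
    have h1 := (c.rotate v hv).support_eq_cons
    have h2 := c.support_eq_cons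
    constructor
    · intro hx
      rw [h1] at hx
      rcases List.mem_cons.mp hx with rfl | hx
      · exact hv
      · rw [h2, List.mem_cons]; exact Or.inr (hperm.perm.mem_iff.mp hx)
    · intro hx
      rw [h2] at hx
      rcases List.mem_cons.mp hx with rfl | hx
      · cases c with
        | nil => exact (hc.ne_nil rfl).elim
        | cons h q =>
          have hx2 : x ∈ (Walk.cons h q).support.tail := by
            simp only [Walk.support_cons, List.tail_cons]
            exact q.end_mem_support
          rw [h1, List.mem_cons]
          exact Or.inr (hperm.perm.mem_iff.mpr hx2)
      · rw [h1, List.mem_cons]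
        exact Or.inr (hperm.perm.mem_iff.mpr hx)
  have hlenr : (c.rotate v hv).length = c.length := by
    rw [← Walk.length_edges, ← Walk.length_edges]
    exact (c.rotate_edges v hv).perm.length_eq
  obtain ⟨x1, hadj, q, hq⟩ := Walk.not_nil_iff.mp hc'.not_nil
  have hqpath : q.IsPath := ((Walk.cons_isCycle_iff q hadj).mp (hq ▸ hc')).1
  have hqe : Even q.length := by
    have h4 : (c.rotate v hv).length = q.length + 1 := by rw [hq]; simp
    rcases ho with ⟨m, hm⟩
    exact ⟨m, by omega⟩
  obtain ⟨M, hM, hMv⟩ := exists_matching_even_path q.length q le_rfl hqpath hqe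
  refine ⟨M, hM, ?_⟩
  rw [hMv]
  ext x
  simp only [Set.mem_setOf_eq]
  have hxq : x ∈ q.support → x ∈ c.support := fun hx => by
    rw [← hsup, hq, Walk.support_cons, List.mem_cons]; exact Or.inr hx
  constructor
  · rintro ⟨hx, hxv⟩
    exact ⟨hxq hx, hxv⟩
  · rintro ⟨hx, hxv⟩
    rw [← hsup, hq, Walk.support_cons, List.mem_cons] at hx
    rcases hx with rfl | hx
    · exact (hxv rfl).elim
    · exact ⟨hx, hxv⟩



/-- Build a walk from a function on indices. -/
def walkOfFn (f : ℕ → V) : (n : ℕ) → (∀ i, i < n → G.Adj (f i) (f (i+1))) → G.Walk (f 0) (f n)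
  | 0, _ => Walk.nil
  | n+1, h => (walkOfFn f n fun i hi => h i (Nat.lt_succ_of_lt hi)).concat (h n n.lt_succ_self)

@[simp] lemma length_walkOfFn (f : ℕ → V) (n : ℕ) (h) :
    (walkOfFn (G := G) f n h).length = n := by
  induction n with
  | zero => rfl
  | succ n ih => rw [walkOfFn, Walk.length_concat, ih]

lemma support_walkOfFn (f : ℕ → V) (n : ℕ) (h) :
    (walkOfFn (G := G) f n h).support = (List.range (n+1)).map f := by
  induction n with
  | zero => rfl
  | succ n ih =>
    rw [walkOfFn, Walk.support_concat, ih, List.range_succ (n := n+1), List.map_append]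
    simp

lemma mem_support_walkOfFn_iff (f : ℕ → V) (n : ℕ) (h) {x : V} :
    x ∈ (walkOfFn (G := G) f n h).support ↔ ∃ i, i ≤ n ∧ f i = x := by
  rw [support_walkOfFn]
  simp only [List.mem_map, List.mem_range]
  constructor
  · rintro ⟨i, hi, rfl⟩; exact ⟨i, by omega, rfl⟩
  · rintro ⟨i, hi, rfl⟩; exact ⟨i, by omega, rfl⟩

lemma isPath_walkOfFn (f : ℕ → V) (n : ℕ) (h)
    (hinj : ∀ i j, i ≤ n → j ≤ n → f i = f j → i = j) :
    (walkOfFn (G := G) f n h).IsPath := by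
  rw [Walk.isPath_def, support_walkOfFn]
  refine List.Nodup.map_on ?_ List.nodup_range
  intro i hi j hj hf
  exact hinj i j (by simpa using Nat.lt_succ_iff.mp (List.mem_range.mp hi))
    (by simpa using Nat.lt_succ_iff.mp (List.mem_range.mp hj)) hf

/-- Lift a walk of `G` whose edges lie in a subgraph `H` to a walk of `H.coe`. -/
def liftWalk {H : G.Subgraph} : {a b : V} → (p : G.Walk a b) →
    (∀ e ∈ p.edges, e ∈ H.edgeSet) → (ha : a ∈ H.verts) → (hb : b ∈ H.verts) →
    H.coe.Walk ⟨a, ha⟩ ⟨b, hb⟩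
  | _, _, Walk.nil, _, _, _ => Walk.nil
  | _, _, Walk.cons h q, hp, ha, hb =>
    have hadj : H.Adj _ _ := Subgraph.mem_edgeSet.mp (hp _ (Walk.edges_cons _ _ ▸ List.mem_cons_self))
    Walk.cons (show H.coe.Adj ⟨_, ha⟩ ⟨_, H.edge_vert hadj.symm⟩ from hadj) (liftWalk q (fun e he => hp e (by simp [he]))
      (H.edge_vert hadj.symm) hb)

@[simp] lemma length_liftWalk {H : G.Subgraph} {a b : V} (p : G.Walk a b) (hp ha hb) :
    (liftWalk (H := H) p hp ha hb).length = p.length := by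
  induction p with
  | nil => rfl
  | cons h q ih => rw [liftWalk, Walk.length_cons, Walk.length_cons, ih]

lemma support_liftWalk {H : G.Subgraph} {a b : V} (p : G.Walk a b) (hp ha hb) :
    (liftWalk (H := H) p hp ha hb).support.map Subtype.val = p.support := by
  induction p with
  | nil => rfl
  | cons h q ih => rw [liftWalk, Walk.support_cons, Walk.support_cons, List.map_cons, ih]

lemma edges_liftWalk {H : G.Subgraph} {a b : V} (p : G.Walk a b) (hp ha hb) :
    (liftWalk (H := H) p hp ha hb).edges.map (Sym2.map Subtype.val) = p.edges := by
  induction p with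
  | nil => rfl
  | cons h q ih => rw [liftWalk, Walk.edges_cons, Walk.edges_cons, List.map_cons, ih]; rfl

lemma mem_support_liftWalk {H : G.Subgraph} {a b : V} (p : G.Walk a b) (hp ha hb)
    {x : H.verts} : x ∈ (liftWalk (H := H) p hp ha hb).support ↔ (x : V) ∈ p.support := by
  rw [← support_liftWalk p hp ha hb]
  constructor
  · intro h; exact List.mem_map_of_mem h
  · intro h
    obtain ⟨y, hy, hyx⟩ := List.mem_map.mp h
    rwa [Subtype.val_injective hyx] at hy

lemma isPath_liftWalk {H : G.Subgraph} {a b : V} (p : G.Walk a b) (hp ha hb)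
    (h : p.IsPath) : (liftWalk (H := H) p hp ha hb).IsPath := by
  rw [Walk.isPath_def]
  have := h.support_nodup
  rw [← support_liftWalk p hp ha hb] at this
  exact this.of_map _

lemma isCycle_liftWalk {H : G.Subgraph} {a : V} (p : G.Walk a a) (hp ha)
    (h : p.IsCycle) : (liftWalk (H := H) p hp ha ha).IsCycle := by
  constructor
  · constructor
    · rw [Walk.isTrail_def]
      have := h.edges_nodup
      rw [← edges_liftWalk p hp ha ha] at this
      exact this.of_map _
    · intro hnil
      have : (liftWalk (H := H) p hp ha ha).length = 0 := by rw [hnil]; rfl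
      rw [length_liftWalk] at this
      exact h.not_nil (Walk.length_eq_zero_iff.mp this)
  · have := h.support_nodup
    rw [← support_liftWalk p hp ha ha] at this
    have h2 : ((liftWalk (H := H) p hp ha ha).support.tail.map Subtype.val).Nodup := by
      rw [List.map_tail]
      exact this
    exact h2.of_map _



/-- Alternating sequence: apply `μ` then `ν` alternately starting from `u₁`. -/
def aseq (μ ν : V → V) (u₁ : V) : ℕ → V
  | 0 => u₁
  | n+1 => if n % 2 = 0 then μ (aseq μ ν u₁ n) else ν (aseq μ ν u₁ n)

variable {μ ν : V → V} {u₁ : V}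

lemma aseq_succ_even {n : ℕ} (h : n % 2 = 0) : aseq μ ν u₁ (n+1) = μ (aseq μ ν u₁ n) := by
  rw [aseq, if_pos h]

lemma aseq_succ_odd {n : ℕ} (h : n % 2 = 1) : aseq μ ν u₁ (n+1) = ν (aseq μ ν u₁ n) := by
  rw [aseq, if_neg (by omega)]

/-- `μ` applied to an odd-indexed element gives the previous element. -/
lemma mu_aseq_odd (hμ2 : ∀ x, μ (μ x) = x) {a : ℕ} (ha : a % 2 = 1) :
    μ (aseq μ ν u₁ a) = aseq μ ν u₁ (a-1) := by
  have h1 : a - 1 + 1 = a := by omega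
  have h2 : (a-1) % 2 = 0 := by omega
  conv_lhs => rw [← h1]
  rw [aseq_succ_even h2, hμ2]

/-- `ν` applied to a positive even-indexed element gives the previous element. -/
lemma nu_aseq_even (hν2 : ∀ x, ν (ν x) = x) {a : ℕ} (ha : a % 2 = 0) (ha0 : 0 < a)
    (hm : ν (aseq μ ν u₁ (a-1)) ≠ aseq μ ν u₁ (a-1)) :
    ν (aseq μ ν u₁ a) = aseq μ ν u₁ (a-1) ∧ aseq μ ν u₁ a ≠ aseq μ ν u₁ (a-1) := by
  have h1 : a - 1 + 1 = a := by omega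
  have h2 : (a-1) % 2 = 1 := by omega
  have h3 : aseq μ ν u₁ a = ν (aseq μ ν u₁ (a-1)) := by
    conv_lhs => rw [← h1]
    exact aseq_succ_odd h2
  constructor
  · rw [h3, hν2]
  · intro h4
    rw [h4] at h3
    exact hm h3.symm

/-- Core injectivity: the alternating sequence is injective before the stopping time. -/
lemma aseq_ne (hμ2 : ∀ x, μ (μ x) = x) (hμne : ∀ x, μ x ≠ x) (hν2 : ∀ x, ν (ν x) = x)
    (hu : ν u₁ = u₁) : ∀ b, ∀ a, a < b →
    (∀ m, m % 2 = 1 → m ≤ b → ν (aseq μ ν u₁ m) ≠ aseq μ ν u₁ m) →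
    aseq μ ν u₁ a ≠ aseq μ ν u₁ b := by
  intro b
  induction b using Nat.strong_induction_on with
  | _ b IH =>
  intro a hab hyp heq
  rcases Nat.mod_two_eq_zero_or_one a with ha2 | ha2 <;>
    rcases Nat.mod_two_eq_zero_or_one b with hb2 | hb2
  · -- both even
    rcases Nat.eq_zero_or_pos a with rfl | ha0
    · -- a = 0
      have hb0 : 0 < b := hab
      have h5 := nu_aseq_even hν2 hb2 hb0 (hyp _ (by omega) (by omega))
      have h6 : ν (aseq μ ν u₁ 0) = aseq μ ν u₁ 0 := hu
      rw [heq] at h6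
      rw [h6] at h5
      exact h5.2 h5.1
    · have h5 := nu_aseq_even hν2 ha2 ha0 (hyp _ (by omega) (by omega))
      have h6 := nu_aseq_even hν2 hb2 (by omega) (hyp _ (by omega) (by omega))
      have h7 : aseq μ ν u₁ (a-1) = aseq μ ν u₁ (b-1) := by rw [← h5.1, ← h6.1, heq]
      exact IH (b-1) (by omega) (a-1) (by omega)
        (fun m hm hmb => hyp m hm (by omega)) h7
  · -- a even, b odd
    rcases eq_or_lt_of_le (Nat.succ_le_of_lt hab) with hb1 | hb3
    · -- b = a + 1
      have h5 : aseq μ ν u₁ b = μ (aseq μ ν u₁ a) := by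
        rw [← hb1]; exact aseq_succ_even ha2
      rw [← heq] at h5
      exact hμne _ h5.symm
    · -- b ≥ a + 3
      have h5 : μ (aseq μ ν u₁ b) = aseq μ ν u₁ (b-1) := mu_aseq_odd hμ2 hb2
      have h7 : aseq μ ν u₁ (a+1) = aseq μ ν u₁ (b-1) := by
        rw [aseq_succ_even ha2, heq, h5]
      exact IH (b-1) (by omega) (a+1) (by omega)
        (fun m hm hmb => hyp m hm (by omega)) h7
  · -- a odd, b even
    rcases eq_or_lt_of_le (Nat.succ_le_of_lt hab) with hb1 | hb3
    · -- b = a + 1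
      have h5 : aseq μ ν u₁ b = ν (aseq μ ν u₁ a) := by
        rw [← hb1]; exact aseq_succ_odd ha2
      rw [← heq] at h5
      exact hyp a ha2 (by omega) h5.symm
    · have h5 := nu_aseq_even hν2 hb2 (by omega) (hyp _ (by omega) (by omega))
      have h7 : aseq μ ν u₁ (a+1) = aseq μ ν u₁ (b-1) := by
        rw [aseq_succ_odd ha2, heq, h5.1]
      exact IH (b-1) (by omega) (a+1) (by omega)
        (fun m hm hmb => hyp m hm (by omega)) h7
  · -- both odd
    have h5 : μ (aseq μ ν u₁ a) = aseq μ ν u₁ (a-1) := mu_aseq_odd hμ2 ha2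
    have h6 : μ (aseq μ ν u₁ b) = aseq μ ν u₁ (b-1) := mu_aseq_odd hμ2 hb2
    have h7 : aseq μ ν u₁ (a-1) = aseq μ ν u₁ (b-1) := by rw [← h5, ← h6, heq]
    exact IH (b-1) (by omega) (a-1) (by omega)
      (fun m hm hmb => hyp m hm (by omega)) h7

/-- Existence of a stopping time. -/
lemma exists_aseq_stop [Finite V] (hμ2 : ∀ x, μ (μ x) = x) (hμne : ∀ x, μ x ≠ x)
    (hν2 : ∀ x, ν (ν x) = x) (hu : ν u₁ = u₁) :
    ∃ n, n % 2 = 1 ∧ ν (aseq μ ν u₁ n) = aseq μ ν u₁ n := by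
  by_contra h
  push_neg at h
  have hinj : Function.Injective (aseq μ ν u₁) := by
    intro a b heq
    by_contra hne
    rcases Nat.lt_or_ge a b with hab | hab
    · exact aseq_ne hμ2 hμne hν2 hu b a hab (fun m hm _ => h m hm) heq
    · exact aseq_ne hμ2 hμne hν2 hu a b (by omega) (fun m hm _ => h m hm) heq.symm
  obtain ⟨a, b, hne, heq⟩ := Finite.exists_ne_map_eq_of_infinite (aseq μ ν u₁)
  exact hne (hinj heq)

/-- Mirror argument: if the endpoint equals the start, the walk is a palindrome. -/
lemma aseq_mirror (hμ2 : ∀ x, μ (μ x) = x) (hν2 : ∀ x, ν (ν x) = x) {T : ℕ}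
    (hT : T % 2 = 1) (heq : aseq μ ν u₁ T = u₁) :
    ∀ i, i ≤ T → aseq μ ν u₁ (T - i) = aseq μ ν u₁ i := by
  intro i
  induction i with
  | zero => intro _; rw [Nat.sub_zero]; exact heq
  | succ i ih =>
    intro hiT
    have hi := ih (by omega)
    have hm1 : T - i - 1 + 1 = T - i := by omega
    have hTi : T - (i+1) = T - i - 1 := by omega
    rcases Nat.mod_two_eq_zero_or_one i with hi2 | hi2
    · have hm2 : (T - i - 1) % 2 = 0 := by omega
      have h5 : aseq μ ν u₁ (T - i) = μ (aseq μ ν u₁ (T - i - 1)) := by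
        conv_lhs => rw [← hm1]
        exact aseq_succ_even hm2
      have h6 : aseq μ ν u₁ (T - i - 1) = μ (aseq μ ν u₁ (T-i)) := by rw [h5, hμ2]
      rw [hTi, h6, hi]
      exact (aseq_succ_even hi2).symm
    · have hm2 : (T - i - 1) % 2 = 1 := by omega
      have h5 : aseq μ ν u₁ (T - i) = ν (aseq μ ν u₁ (T - i - 1)) := by
        conv_lhs => rw [← hm1]
        exact aseq_succ_odd hm2
      have h6 : aseq μ ν u₁ (T - i - 1) = ν (aseq μ ν u₁ (T-i)) := by rw [h5, hν2]
      rw [hTi, h6, hi]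
      exact (aseq_succ_odd hi2).symm

/-- The endpoint differs from the start. -/
lemma aseq_stop_ne_start (hμ2 : ∀ x, μ (μ x) = x) (hμne : ∀ x, μ x ≠ x)
    (hν2 : ∀ x, ν (ν x) = x) {T : ℕ} (hT : T % 2 = 1)
    (hmin : ∀ m, m < T → m % 2 = 1 → ν (aseq μ ν u₁ m) ≠ aseq μ ν u₁ m) :
    aseq μ ν u₁ T ≠ u₁ := by
  intro heq
  have hmir := aseq_mirror hμ2 hν2 hT heq (T/2) (by omega)
  have hTh : T - T/2 = T/2 + 1 := by omega
  rw [hTh] at hmir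
  rcases Nat.mod_two_eq_zero_or_one (T/2) with hh2 | hh2
  · rw [aseq_succ_even hh2] at hmir
    exact hμne _ hmir
  · rw [aseq_succ_odd hh2] at hmir
    exact hmin (T/2) (by omega) hh2 hmir

/-- Injectivity up to and including the stopping time. -/
lemma aseq_inj_upto (hμ2 : ∀ x, μ (μ x) = x) (hμne : ∀ x, μ x ≠ x)
    (hν2 : ∀ x, ν (ν x) = x) (hu : ν u₁ = u₁) {T : ℕ} (hT : T % 2 = 1)
    (hstop : ν (aseq μ ν u₁ T) = aseq μ ν u₁ T)
    (hmin : ∀ m, m < T → m % 2 = 1 → ν (aseq μ ν u₁ m) ≠ aseq μ ν u₁ m) :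
    ∀ a b, a < b → b ≤ T → aseq μ ν u₁ a ≠ aseq μ ν u₁ b := by
  intro a b hab hbT
  rcases eq_or_lt_of_le hbT with rfl | hbT'
  · -- b = T
    intro heq
    rcases Nat.eq_zero_or_pos a with rfl | ha0
    · exact aseq_stop_ne_start hμ2 hμne hν2 hT hmin heq.symm
    rcases Nat.mod_two_eq_zero_or_one a with ha2 | ha2
    · have h5 := nu_aseq_even hν2 ha2 ha0 (hmin _ (by omega) (by omega))
      rw [heq, hstop, ← heq] at h5
      exact h5.2 h5.1
    · have h6 := hmin a hab ha2
      rw [heq, hstop, ← heq] at h6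
      exact h6 rfl
  · exact aseq_ne hμ2 hμne hν2 hu b a hab (fun m hm hmb => hmin m (by omega) hm)



/-- The homomorphism from an induced subgraph into the graph. -/
def induceHom (s : Set V) : G.induce s →g G where
  toFun := Subtype.val
  map_rel' := fun h => by simpa using h

lemma induceHom_injective (s : Set V) :
    Function.Injective (induceHom (G := G) s) := Subtype.val_injective

/-- A matching with vertex set `s` gives a perfect matching of the induced subgraph. -/
lemma induce_hasPM_of_matching {M : G.Subgraph} (hM : M.IsMatching) {s : Set V}
    (hv : M.verts = s) : ∃ N : (G.induce s).Subgraph, N.IsPerfectMatching := by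
  refine ⟨⟨Set.univ, fun x y => M.Adj ↑x ↑y, fun {x y} h => ?_, fun {x y} _ => trivial,
    ⟨fun _ _ h => M.adj_symm h⟩⟩, ?_, fun _ => trivial⟩
  · simp only [comap_adj, Function.Embedding.coe_subtype, induce_eq_coe_induce_top]
    exact ⟨x.2, y.2, M.adj_sub h⟩
  · intro v _
    have hv' : (v : V) ∈ M.verts := by rw [hv]; exact v.2
    obtain ⟨w, hw, huniq⟩ := hM hv'
    have hws : w ∈ s := by rw [← hv]; exact M.edge_vert hw.symm
    refine ⟨⟨w, hws⟩, hw, ?_⟩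
    intro y hy
    exact Subtype.ext (huniq _ hy)

/-- A perfect matching of an induced subgraph gives a matching with vertex set `s`. -/
lemma matching_of_induce_PM {s : Set V} {N : (G.induce s).Subgraph}
    (hN : N.IsPerfectMatching) :
    ∃ M : G.Subgraph, M.IsMatching ∧ M.verts = s := by
  refine ⟨N.map (induceHom s), hN.1.map _ (induceHom_injective s), ?_⟩
  rw [Subgraph.map_verts]
  have : N.verts = Set.univ := Set.eq_univ_of_forall hN.2
  rw [this]
  ext x
  simp only [Set.image_univ, Set.mem_range]
  constructor
  · rintro ⟨⟨a, ha⟩, rfl⟩; exact ha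
  · intro hx; exact ⟨⟨x, hx⟩, rfl⟩



lemma length_rotate' [DecidableEq V] {u v : V} (c : G.Walk u u) (hv : v ∈ c.support) :
    (c.rotate v hv).length = c.length := by
  rw [← Walk.length_edges, ← Walk.length_edges]
  exact (c.rotate_edges v hv).perm.length_eq

lemma mem_support_rotate [DecidableEq V] {u v : V} (c : G.Walk u u) (hnil : ¬ c.Nil)
    (hv : v ∈ c.support) {x : V} : x ∈ (c.rotate v hv).support ↔ x ∈ c.support := by
  have hperm := c.support_rotate v hv
  have h1 := (c.rotate v hv).support_eq_cons
  have h2 := c.support_eq_cons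
  constructor
  · intro hx
    rw [h1] at hx
    rcases List.mem_cons.mp hx with rfl | hx
    · exact hv
    · rw [h2, List.mem_cons]; exact Or.inr (hperm.perm.mem_iff.mp hx)
  · intro hx
    rw [h2] at hx
    rcases List.mem_cons.mp hx with rfl | hx
    · cases c with
      | nil => simp at hnil
      | cons h q =>
        have hx2 : x ∈ (Walk.cons h q).support.tail := by
          simp only [Walk.support_cons, List.tail_cons]
          exact q.end_mem_support
        rw [h1, List.mem_cons]
        exact Or.inr (hperm.perm.mem_iff.mpr hx2)
    · rw [h1, List.mem_cons]
      exact Or.inr (hperm.perm.mem_iff.mpr hx)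


def pairFn {α : Fin 2 → Sort*} (x : α 0) (y : α 1) : ∀ i, α i := fun i =>
  match i with
  | 0 => x
  | 1 => y

lemma exists_matching_interior_odd_path {a b : V} (p : G.Walk a b) (hp : p.IsPath)
    (ho : Odd p.length) :
    ∃ M : G.Subgraph, M.IsMatching ∧ M.verts = {x | x ∈ p.support ∧ x ≠ a ∧ x ≠ b} := by
  cases p with
  | nil => simp at ho
  | cons h q =>
    rename_i x1
    have hqe : Even q.length := by
      simp only [Walk.length_cons] at ho; rcases ho with ⟨m, hm⟩; exact ⟨m, by omega⟩
    obtain ⟨M, hM, hMv⟩ := exists_matching_even_path q.length q le_rfl hp.of_cons hqe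
    have hnd := hp.support_nodup
    simp only [Walk.support_cons, List.nodup_cons] at hnd
    refine ⟨M, hM, ?_⟩
    rw [hMv]
    ext x
    simp only [Set.mem_setOf_eq, Walk.support_cons, List.mem_cons]
    constructor
    · rintro ⟨hx, hxb⟩
      exact ⟨Or.inr hx, fun hxa => hnd.1 (hxa ▸ hx), hxb⟩
    · rintro ⟨rfl | hx, hxa, hxb⟩
      · exact (hxa rfl).elim
      · exact ⟨hx, hxb⟩

@[simp] lemma pairFn_zero {α : Fin 2 → Sort*} (x : α 0) (y : α 1) : pairFn x y 0 = x := rfl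
@[simp] lemma pairFn_one {α : Fin 2 → Sort*} (x : α 0) (y : α 1) : pairFn x y 1 = y := rfl

lemma hasOddCycleCover_of_nice (h : HasNiceEvenSubdivT G) : HasOddCycleCover G := by
  classical
  obtain ⟨H, ⟨v, w, C1, C2, P, hC1, hC2, ho1, ho2, hP, hoP, hdisj, hPC1, hPC2, htot, hedge⟩,
    N, hN⟩ := h
  obtain ⟨M1, hM1, hM1v⟩ := matching_of_induce_PM hN
  have hfi : Function.Injective H.hom := Subgraph.hom_injective
  have hD1 : (C1.map H.hom).IsCycle := (Walk.map_isCycle_iff_of_injective hfi).mpr hC1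
  have hD2 : (C2.map H.hom).IsCycle := (Walk.map_isCycle_iff_of_injective hfi).mpr hC2
  have hPg : (P.map H.hom).IsPath := Walk.map_isPath_of_injective hfi hP
  have hoPg : Odd (P.map H.hom).length := by rwa [Walk.length_map]
  -- membership transfer
  have hmem : ∀ {x y : H.verts} (q : H.coe.Walk x y) {z : H.verts},
      (z : V) ∈ (q.map H.hom).support ↔ z ∈ q.support := by
    intro x y q z
    rw [Walk.support_map]
    constructor
    · intro hz
      obtain ⟨z', hz', hzz⟩ := List.mem_map.mp hz
      rwa [hfi hzz] at hz'
    · intro hz; exact List.mem_map_of_mem hz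
  obtain ⟨M2, hM2, hM2v⟩ := exists_matching_interior_odd_path (P.map H.hom) hPg hoPg
  have hsupH : ∀ {x y : H.verts} (q : H.coe.Walk x y) {z : V},
      z ∈ (q.map H.hom).support → z ∈ H.verts := by
    intro x y q z hz
    rw [Walk.support_map] at hz
    obtain ⟨z', _, rfl⟩ := List.mem_map.mp hz
    exact z'.2
  -- the matching
  have hdisj12 : Disjoint M1.support M2.support := by
    rw [hM1.support_eq_verts, hM2.support_eq_verts, hM1v, hM2v, Set.disjoint_left]
    intro x hx hx2
    exact hx (hsupH P hx2.1)
  have hcross : ∀ x : V, x ∈ (C1.map H.hom).support → x ∉ (C2.map H.hom).support := by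
    intro x hx1 hx2
    have hxH := hsupH C1 hx1
    exact hdisj (⟨x, hxH⟩ : H.verts) ((hmem C1).mp hx1) ((hmem C2).mp hx2)
  have hcyc_not_mem : ∀ (x : V), (x ∈ (C1.map H.hom).support ∨ x ∈ (C2.map H.hom).support) →
      x ∉ (M1 ⊔ M2).verts := by
    intro x hx
    have hxH : x ∈ H.verts := by
      rcases hx with hx | hx
      · exact hsupH C1 hx
      · exact hsupH C2 hx
    rw [Subgraph.verts_sup, hM1v, hM2v]
    rintro (hc | hc)
    · exact hc hxH
    · have hzP : (⟨x, hxH⟩ : H.verts) ∈ P.support := (hmem P).mp hc.1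
      rcases hx with hx | hx
      · exact hc.2.1 (congrArg Subtype.val (hPC1 _ hzP ((hmem C1).mp hx)))
      · exact hc.2.2 (congrArg Subtype.val (hPC2 _ hzP ((hmem C2).mp hx)))
  refine ⟨M1 ⊔ M2, 2, pairFn (↑v) (↑w),
    pairFn (α := fun i => G.Walk (pairFn (α := fun _ => V) (↑v) (↑w) i)
      (pairFn (α := fun _ => V) (↑v) (↑w) i)) (C1.map H.hom) (C2.map H.hom), two_pos,
    hM1.sup hM2 hdisj12, ?_, ?_, ?_, ?_⟩
  · refine Fin.forall_fin_two.mpr ⟨⟨hD1, ?_⟩, ⟨hD2, ?_⟩⟩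
    · show Odd (C1.map H.hom).length
      rwa [Walk.length_map]
    · show Odd (C2.map H.hom).length
      rwa [Walk.length_map]
  · refine Fin.forall_fin_two.mpr ⟨Fin.forall_fin_two.mpr ⟨?_, ?_⟩,
      Fin.forall_fin_two.mpr ⟨?_, ?_⟩⟩
    · intro hne; exact absurd rfl hne
    · intro _ x hx1 hx2
      exact hcross x hx1 hx2
    · intro _ x hx2 hx1
      exact hcross x hx1 hx2
    · intro hne; exact absurd rfl hne
  · refine Fin.forall_fin_two.mpr ⟨?_, ?_⟩
    · intro x hx; exact hcyc_not_mem x (Or.inl hx)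
    · intro x hx; exact hcyc_not_mem x (Or.inr hx)
  · intro x
    by_cases hxH : x ∈ H.verts
    · rcases htot ⟨x, hxH⟩ with hx | hx | hx
      · have h9 : ((⟨x, hxH⟩ : H.verts) : V) ∈ (C1.map H.hom).support := (hmem C1).mpr hx
        exact Or.inr ⟨0, h9⟩
      · have h9 : ((⟨x, hxH⟩ : H.verts) : V) ∈ (C2.map H.hom).support := (hmem C2).mpr hx
        exact Or.inr ⟨1, h9⟩
      · by_cases hxv : (⟨x, hxH⟩ : H.verts) = v
        · have h9 : ((⟨x, hxH⟩ : H.verts) : V) ∈ (C1.map H.hom).support := by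
            refine (hmem C1).mpr ?_
            rw [hxv]; exact C1.start_mem_support
          exact Or.inr ⟨0, h9⟩
        by_cases hxw : (⟨x, hxH⟩ : H.verts) = w
        · have h9 : ((⟨x, hxH⟩ : H.verts) : V) ∈ (C2.map H.hom).support := by
            refine (hmem C2).mpr ?_
            rw [hxw]; exact C2.start_mem_support
          exact Or.inr ⟨1, h9⟩
        · refine Or.inl ?_
          rw [Subgraph.verts_sup, hM2v]
          refine Or.inr ⟨(hmem P).mpr hx, ?_, ?_⟩
          · intro hxv'; exact hxv (Subtype.ext hxv')
          · intro hxw'; exact hxw (Subtype.ext hxw')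
    · refine Or.inl ?_
      rw [Subgraph.verts_sup, hM1v]
      exact Or.inl hxH


lemma matching_sup_of_disjoint_verts {M M' : G.Subgraph} (h1 : M.IsMatching)
    (h2 : M'.IsMatching) (hd : Disjoint M.verts M'.verts) : (M ⊔ M').IsMatching :=
  h1.sup h2 (Set.disjoint_of_subset (M.support_subset_verts) (M'.support_subset_verts) hd)

lemma mem_edges_liftWalk {H : G.Subgraph} {a b : V} (p : G.Walk a b) (hp ha hb)
    {e : Sym2 H.verts} :
    e ∈ (liftWalk (H := H) p hp ha hb).edges ↔ Sym2.map Subtype.val e ∈ p.edges := by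
  rw [← edges_liftWalk p hp ha hb]
  constructor
  · exact fun h => List.mem_map_of_mem h
  · intro h
    obtain ⟨e', he', hee⟩ := List.mem_map.mp h
    rwa [Sym2.map.injective Subtype.val_injective hee] at he'

lemma coe_edgeSet_iff {H : G.Subgraph} (e : Sym2 H.verts) :
    e ∈ H.coe.edgeSet ↔ Sym2.map Subtype.val e ∈ H.edgeSet := by
  refine Sym2.ind (fun x y => ?_) e
  rw [Sym2.map_pair_eq]
  simp only [mem_edgeSet, Subgraph.mem_edgeSet, Subgraph.coe_adj]

/-- The hard direction: a perfect matching plus an odd cycle cover yields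
a nice even subdivision of T. -/
lemma nice_of_cover_aux [Fintype V] (Mpm : G.Subgraph) (hMpm : Mpm.IsPerfectMatching) :
    ∀ k : ℕ, ∀ (u : Fin k → V) (C : ∀ i, G.Walk (u i) (u i)) (M₀ : G.Subgraph),
    0 < k → M₀.IsMatching →
    (∀ i, (C i).IsCycle ∧ Odd (C i).length) →
    (∀ i j, i ≠ j → ∀ x, x ∈ (C i).support → x ∉ (C j).support) →
    (∀ i, ∀ x ∈ (C i).support, x ∉ M₀.verts) →
    (∀ x, x ∈ M₀.verts ∨ ∃ i, x ∈ (C i).support) →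
    HasNiceEvenSubdivT G := by
  intro k
  induction k using Nat.strong_induction_on with
  | _ k IH =>
  intro u C M₀ hk hM₀ hcyc hCC hMC hcover
  classical
  -- near-perfect matchings of the cycles, missing their base points
  have hNM : ∀ i : Fin k, ∃ Ni : G.Subgraph, Ni.IsMatching ∧
      Ni.verts = {x | x ∈ (C i).support ∧ x ≠ u i} :=
    fun i => exists_near_matching_cycle (C i) (hcyc i).1 (hcyc i).2 ((C i).start_mem_support)
  choose NM hNMm hNMv using hNM
  have hu_mem : ∀ i, u i ∈ (C i).support := fun i => (C i).start_mem_support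
  have hu_eq : ∀ i j, u i ∈ (C j).support → i = j := by
    intro i j h
    by_contra hne
    exact hCC i j hne (u i) (hu_mem i) h
  -- the big near-perfect matching N
  set N : G.Subgraph := M₀ ⊔ ⨆ i, NM i with hNdef
  have hNMdisj : Pairwise fun i j => Disjoint (NM i).support (NM j).support := by
    intro i j hij
    refine Set.disjoint_of_subset ((NM i).support_subset_verts)
      ((NM j).support_subset_verts) ?_
    rw [hNMv, hNMv, Set.disjoint_left]
    rintro x ⟨hx1, -⟩ ⟨hx2, -⟩
    exact hCC i j hij x hx1 hx2
  have hNmatch : N.IsMatching := by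
    refine matching_sup_of_disjoint_verts hM₀ (Subgraph.IsMatching.iSup hNMm hNMdisj) ?_
    rw [Subgraph.verts_iSup, Set.disjoint_left]
    intro x hx hx2
    obtain ⟨i, hi⟩ := Set.mem_iUnion.mp hx2
    rw [hNMv] at hi
    exact hMC i x hi.1 hx
  have hNverts : N.verts = M₀.verts ∪ ⋃ i, {x | x ∈ (C i).support ∧ x ≠ u i} := by
    rw [hNdef, Subgraph.verts_sup, Subgraph.verts_iSup]
    congr 1
    ext x
    simp only [Set.mem_iUnion]
    constructor
    · rintro ⟨i, hi⟩; rw [hNMv] at hi; exact ⟨i, hi⟩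
    · rintro ⟨i, hi⟩; exact ⟨i, by rw [hNMv]; exact hi⟩
  have hu_not_N : ∀ i, u i ∉ N.verts := by
    intro i hi
    rw [hNverts] at hi
    rcases hi with hi | hi
    · exact hMC i (u i) (hu_mem i) hi
    · obtain ⟨j, hj, hju⟩ := Set.mem_iUnion.mp hi
      exact hju (by rw [hu_eq i j hj])
  have hmem_N : ∀ x, (∀ i, x ≠ u i) → x ∈ N.verts := by
    intro x hx
    rw [hNverts]
    rcases hcover x with h | ⟨i, hi⟩
    · exact Or.inl h
    · exact Or.inr (Set.mem_iUnion.mpr ⟨i, hi, hx i⟩)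
  -- the involutions
  set μ : V → V := partner Mpm with hμdef
  set ν : V → V := partner N with hνdef
  have hμ2 : ∀ x, μ (μ x) = x := partner_invol hMpm.1
  have hμne : ∀ x, μ x ≠ x := fun x => partner_ne (hMpm.2 x) hMpm.1
  have hGμ : ∀ x, G.Adj x (μ x) := fun x => Mpm.adj_sub (partner_adj (hMpm.2 x) hMpm.1)
  have hν2 : ∀ x, ν (ν x) = x := partner_invol hNmatch
  have hνfix : ∀ x, ν x = x ↔ x ∉ N.verts := by
    intro x
    constructor
    · intro h hx; exact partner_ne hx hNmatch h
    · exact partner_of_not_mem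
  have hGν : ∀ x, ν x ≠ x → G.Adj x (ν x) := by
    intro x h
    have hx : x ∈ N.verts := by
      by_contra hx; exact h (partner_of_not_mem hx)
    exact N.adj_sub (partner_adj hx hNmatch)
  have hνM₀ : ∀ x, x ∈ M₀.verts → M₀.Adj x (ν x) := by
    intro x hx
    have hxN : x ∈ N.verts := by rw [hNverts]; exact Or.inl hx
    have hadj : N.Adj x (ν x) := partner_adj hxN hNmatch
    rw [hNdef] at hadj
    rcases Subgraph.sup_adj.mp hadj with h | h
    · exact h
    · obtain ⟨i, hi⟩ := Subgraph.iSup_adj.mp h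
      have : x ∈ (NM i).verts := (NM i).edge_vert hi
      rw [hNMv] at this
      exact absurd hx (hMC i x this.1)
  have hνC : ∀ i x, x ∈ (C i).support → x ≠ u i →
      ν x ∈ (C i).support ∧ ν x ≠ u i := by
    intro i x hx hxu
    have hxN : x ∈ N.verts := by
      rw [hNverts]; exact Or.inr (Set.mem_iUnion.mpr ⟨i, hx, hxu⟩)
    have hadj : N.Adj x (ν x) := partner_adj hxN hNmatch
    rw [hNdef] at hadj
    rcases Subgraph.sup_adj.mp hadj with h | h
    · exact absurd (M₀.edge_vert h) (hMC i x hx)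
    · obtain ⟨i', hi'⟩ := Subgraph.iSup_adj.mp h
      have hxv : x ∈ (NM i').verts := (NM i').edge_vert hi'
      have hyv : ν x ∈ (NM i').verts := (NM i').edge_vert hi'.symm
      rw [hNMv] at hxv hyv
      have : i' = i := by
        by_contra hne
        exact hCC i' i hne x hxv.1 hx
      rw [this] at hyv
      exact hyv
  -- the alternating sequence
  set i₁ : Fin k := ⟨0, hk⟩ with hi₁def
  set u₁ : V := u i₁ with hu₁def
  have hu1 : ν u₁ = u₁ := (hνfix u₁).mpr (hu_not_N i₁)
  set A : ℕ → V := aseq μ ν u₁ with hAdef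
  obtain ⟨T, hT2, hTstop, hmin⟩ : ∃ T, T % 2 = 1 ∧ ν (A T) = A T ∧
      ∀ m, m < T → m % 2 = 1 → ν (A m) ≠ A m := by
    have hstopex : ∃ n, n % 2 = 1 ∧ ν (A n) = A n := exists_aseq_stop hμ2 hμne hν2 hu1
    refine ⟨Nat.find hstopex, (Nat.find_spec hstopex).1, (Nat.find_spec hstopex).2, ?_⟩
    intro m hm h2 heq
    exact Nat.find_min hstopex hm ⟨h2, heq⟩
  have hinj : ∀ a b, a < b → b ≤ T → A a ≠ A b :=
    aseq_inj_upto hμ2 hμne hν2 hu1 hT2 hTstop hmin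
  have hATne : A T ≠ u₁ := aseq_stop_ne_start hμ2 hμne hν2 hT2 hmin
  have hATexp : ∃ j, A T = u j := by
    by_contra h
    push_neg at h
    exact ((hνfix (A T)).mp hTstop) (hmem_N (A T) h)
  obtain ⟨j₀, hj₀⟩ := hATexp
  have hj₀ne : j₀ ≠ i₁ := by
    rintro rfl
    exact hATne hj₀
  -- first time on another cycle
  obtain ⟨d, ⟨j, hji₁, hdj⟩, hdT, hdmin⟩ : ∃ d, (∃ j, j ≠ i₁ ∧ A d ∈ (C j).support) ∧
      d ≤ T ∧ ∀ m, m < d → ∀ j', j' ≠ i₁ → A m ∉ (C j').support := by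
    have hdex : ∃ n, ∃ j : Fin k, j ≠ i₁ ∧ A n ∈ (C j).support :=
      ⟨T, j₀, hj₀ne, by rw [hj₀]; exact hu_mem j₀⟩
    refine ⟨Nat.find hdex, Nat.find_spec hdex,
      Nat.find_min' hdex ⟨j₀, hj₀ne, by rw [hj₀]; exact hu_mem j₀⟩, ?_⟩
    intro m hm j' hj' hmem
    exact Nat.find_min hdex hm ⟨j', hj', hmem⟩
  have hd0 : 0 < d := by
    by_contra h
    have h0 : d = 0 := by omega
    rw [h0] at hdj
    exact hCC j i₁ hji₁ u₁ hdj (hu_mem i₁)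
  -- last time on the first cycle before d
  obtain ⟨c, hc, hcd, hcmax⟩ : ∃ c, A c ∈ (C i₁).support ∧ c ≤ d - 1 ∧
      ∀ m, c < m → m ≤ d-1 → A m ∉ (C i₁).support := by
    refine ⟨Nat.findGreatest (fun m => A m ∈ (C i₁).support) (d-1),
      Nat.findGreatest_spec (P := fun m => A m ∈ (C i₁).support) (Nat.zero_le _)
        (hu_mem i₁), Nat.findGreatest_le _, ?_⟩
    intro m hm hm2
    exact Nat.findGreatest_is_greatest (P := fun m => A m ∈ (C i₁).support) hm hm2
  -- parity facts
  have hc2 : c % 2 = 0 := by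
    rcases Nat.mod_two_eq_zero_or_one c with h | hodd
    · exact h
    exfalso
    have hc0 : 0 < c := by omega
    have hcT : c < T := by omega
    have hAcu : A c ≠ u i₁ := by
      intro h
      exact hinj 0 c hc0 (by omega) (by rw [h]; rfl)
    have h5 : A (c+1) = ν (A c) := aseq_succ_odd hodd
    have h6 := hνC i₁ (A c) hc hAcu
    rw [← h5] at h6
    rcases Nat.lt_or_ge (c+1) d with h7 | h7
    · exact hcmax (c+1) (by omega) (by omega) h6.1
    · have h8 : c + 1 = d := by omega
      rw [h8] at h6
      exact hCC j i₁ hji₁ (A d) hdj h6.1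
  have hd2 : d % 2 = 1 := by
    rcases Nat.mod_two_eq_zero_or_one d with heven | h
    swap
    · exact h
    exfalso
    have h5 : A d = ν (A (d-1)) := by
      have h6 : (d-1) % 2 = 1 := by omega
      have h8 : A (d-1+1) = ν (A (d-1)) := aseq_succ_odd h6
      have h7 : d - 1 + 1 = d := by omega
      rwa [h7] at h8
    by_cases hin : A (d-1) ∈ (C i₁).support
    · have : c = d - 1 := by
        by_contra hne
        exact hcmax (d-1) (by omega) le_rfl hin
      omega
    · have hM : A (d-1) ∈ M₀.verts := by
        rcases hcover (A (d-1)) with h | ⟨i, hi⟩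
        · exact h
        · exfalso
          by_cases hii : i = i₁
          · rw [hii] at hi; exact hin hi
          · exact hdmin (d-1) (by omega) i hii hi
      have h8 := hνM₀ (A (d-1)) hM
      have h9 : ν (A (d-1)) ∈ M₀.verts := M₀.edge_vert h8.symm
      rw [← h5] at h9
      exact hMC j (A d) hdj h9
  have hcltd : c < d := by omega
  set n : ℕ := d - c with hndef
  have hn2 : n % 2 = 1 := by omega
  -- adjacency along the sequence
  have hadjseq : ∀ m, m < T → G.Adj (A m) (A (m+1)) := by
    intro m hm
    rcases Nat.mod_two_eq_zero_or_one m with h | h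
    · have h8 : A (m+1) = μ (A m) := aseq_succ_even h
      rw [h8]; exact hGμ _
    · have h8 : A (m+1) = ν (A m) := aseq_succ_odd h
      rw [h8]; exact hGν _ (hmin m hm h)
  -- the connecting path S
  have hSadj : ∀ i, i < n → G.Adj (A (c+i)) (A (c+i+1)) := by
    intro i hi
    exact hadjseq (c+i) (by omega)
  set S0 : G.Walk (A (c+0)) (A (c+n)) := walkOfFn (fun i => A (c+i)) n hSadj with hS0def
  set S : G.Walk (A c) (A d) := S0.copy (by norm_num) (by congr 1; omega) with hSdef
  have hSlen : S.length = n := by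
    rw [hSdef, Walk.length_copy, hS0def, length_walkOfFn]
  have hSsup : ∀ x, x ∈ S.support ↔ ∃ i, i ≤ n ∧ A (c+i) = x := by
    intro x
    rw [hSdef, Walk.support_copy, hS0def, mem_support_walkOfFn_iff]
  have hSpath : S.IsPath := by
    rw [hSdef, Walk.isPath_copy, hS0def]
    refine isPath_walkOfFn _ _ _ ?_
    intro i i' hi hi' heq
    by_contra hne
    rcases Nat.lt_or_ge i i' with h | h
    · exact hinj (c+i) (c+i') (by omega) (by omega) heq
    · exact hinj (c+i') (c+i) (by omega) (by omega) heq.symm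
  -- interior facts
  have hSint_M₀ : ∀ m, c < m → m < d → A m ∈ M₀.verts := by
    intro m h1 h2
    rcases hcover (A m) with h | ⟨i, hi⟩
    · exact h
    exfalso
    by_cases hii : i = i₁
    · rw [hii] at hi; exact hcmax m h1 (by omega) hi
    · exact hdmin m h2 i hii hi
  have hSint_closed : ∀ m, c < m → m < d → ∀ y, M₀.Adj (A m) y →
      ∃ m', c < m' ∧ m' < d ∧ A m' = y := by
    intro m h1 h2 y hy
    have hyM : y ∈ M₀.verts := M₀.edge_vert hy.symm
    have hym : y = ν (A m) := by
      have h3 := hνM₀ (A m) (hSint_M₀ m h1 h2)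
      obtain ⟨w', hw', huniq⟩ := hM₀ (hSint_M₀ m h1 h2)
      rw [huniq y hy, huniq (ν (A m)) h3]
    rcases Nat.mod_two_eq_zero_or_one m with heven | hodd
    · have h4 := nu_aseq_even hν2 heven (by omega) (hmin (m-1) (by omega) (by omega))
      refine ⟨m-1, ?_, by omega, by rw [hym, h4.1]⟩
      rcases Nat.lt_or_ge c (m-1) with h | h
      · exact h
      exfalso
      have h6 : m - 1 = c := by omega
      rw [h6] at h4
      rw [hym, h4.1] at hyM
      exact hMC i₁ (A c) hc hyM
    · have h4 : A (m+1) = ν (A m) := aseq_succ_odd hodd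
      refine ⟨m+1, by omega, ?_, by rw [hym, h4]⟩
      rcases Nat.lt_or_ge (m+1) d with h | h
      · exact h
      exfalso
      have h6 : m + 1 = d := by omega
      rw [hym, ← h4, h6] at hyM
      exact hMC j (A d) hdj hyM
  -- interior vertex set of the path
  set Sint : Set V := {x | ∃ m, c < m ∧ m < d ∧ A m = x} with hSintdef
  have hMrem : (M₀.deleteVerts Sint).IsMatching := by
    refine isMatching_deleteVerts hM₀ ?_
    rintro x ⟨m, h1, h2, rfl⟩ y hy
    exact hSint_closed m h1 h2 y hy
  -- path meets first cycle only at A c, other cycle only at A d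
  have hSi₁ : ∀ x, x ∈ S.support → x ∈ (C i₁).support → x = A c := by
    intro x hx hxc
    obtain ⟨i, hi, rfl⟩ := (hSsup x).mp hx
    rcases Nat.eq_zero_or_pos i with rfl | hi0
    · rfl
    rcases Nat.lt_or_ge i n with hin | hin
    · exact absurd (hSint_M₀ (c+i) (by omega) (by omega)) (hMC i₁ _ hxc)
    · exfalso
      have h6 : c + i = d := by omega
      rw [h6] at hxc
      exact hCC j i₁ hji₁ (A d) hdj hxc
  have hSj : ∀ x, x ∈ S.support → x ∈ (C j).support → x = A d := by
    intro x hx hxc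
    obtain ⟨i, hi, rfl⟩ := (hSsup x).mp hx
    rcases Nat.lt_or_ge i n with hin | hin
    · rcases Nat.eq_zero_or_pos i with rfl | hi0
      · exact absurd hxc (hCC i₁ j (Ne.symm hji₁) (A (c+0)) hc)
      · exact absurd (hSint_M₀ (c+i) (by omega) (by omega)) (hMC j _ hxc)
    · congr 1; omega
  have hSsub_parts : ∀ x, x ∈ S.support →
      x ∈ (C i₁).support ∨ x ∈ (C j).support ∨ x ∈ Sint := by
    intro x hx
    obtain ⟨i, hi, rfl⟩ := (hSsup x).mp hx
    rcases Nat.eq_zero_or_pos i with rfl | hi0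
    · exact Or.inl hc
    rcases Nat.lt_or_ge i n with hin | hin
    · exact Or.inr (Or.inr ⟨c+i, by omega, by omega, rfl⟩)
    · refine Or.inr (Or.inl ?_)
      have h6 : c + i = d := by omega
      rw [h6]; exact hdj
  have hSint_sub : ∀ x, x ∈ Sint → x ∈ S.support := by
    rintro x ⟨m, h1, h2, rfl⟩
    refine (hSsup _).mpr ⟨m - c, by omega, ?_⟩
    congr 1; omega
  by_cases hex : ∀ i : Fin k, i = i₁ ∨ i = j
  · -- only two cycles: build the even subdivision of T
    set R1 := (C i₁).rotate (A c) hc with hR1def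
    set R2 := (C j).rotate (A d) hdj with hR2def
    have hR1sup : ∀ x : V, x ∈ R1.support ↔ x ∈ (C i₁).support :=
      fun x => mem_support_rotate (C i₁) (hcyc i₁).1.not_nil hc
    have hR2sup : ∀ x : V, x ∈ R2.support ↔ x ∈ (C j).support :=
      fun x => mem_support_rotate (C j) (hcyc j).1.not_nil hdj
    set H : G.Subgraph := R1.toSubgraph ⊔ R2.toSubgraph ⊔ S.toSubgraph with hHdef
    have hHverts : ∀ x, x ∈ H.verts ↔
        (x ∈ (C i₁).support ∨ x ∈ (C j).support ∨ x ∈ S.support) := by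
      intro x
      rw [hHdef, Subgraph.verts_sup, Subgraph.verts_sup]
      simp only [Set.mem_union, Walk.mem_verts_toSubgraph, hR1sup, hR2sup, or_assoc]
    have hR1e : ∀ e ∈ R1.edges, e ∈ H.edgeSet := fun e he =>
      Subgraph.edgeSet_mono (le_sup_left.trans le_sup_left)
        (R1.mem_edges_toSubgraph.mpr he)
    have hR2e : ∀ e ∈ R2.edges, e ∈ H.edgeSet := fun e he =>
      Subgraph.edgeSet_mono (le_sup_right.trans le_sup_left)
        (R2.mem_edges_toSubgraph.mpr he)
    have hSe : ∀ e ∈ S.edges, e ∈ H.edgeSet := fun e he =>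
      Subgraph.edgeSet_mono le_sup_right (S.mem_edges_toSubgraph.mpr he)
    have hvH : A c ∈ H.verts := (hHverts _).mpr (Or.inl hc)
    have hwH : A d ∈ H.verts := (hHverts _).mpr (Or.inr (Or.inl hdj))
    have hHedge : ∀ e', e' ∈ H.edgeSet ↔
        (e' ∈ R1.edges ∨ e' ∈ R2.edges ∨ e' ∈ S.edges) := by
      intro e'
      rw [hHdef, Subgraph.edgeSet_sup, Subgraph.edgeSet_sup]
      simp only [Set.mem_union, Walk.mem_edges_toSubgraph, or_assoc]
    -- niceness
    have hvc : (M₀.deleteVerts Sint).verts = H.vertsᶜ := by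
      ext x
      rw [Subgraph.deleteVerts_verts, Set.mem_compl_iff]
      constructor
      · rintro ⟨hxM, hxS⟩ hmem
        rcases (hHverts x).mp hmem with h | h | h
        · exact hMC i₁ x h hxM
        · exact hMC j x h hxM
        · rcases hSsub_parts x h with h' | h' | h'
          · exact hMC i₁ x h' hxM
          · exact hMC j x h' hxM
          · exact hxS h'
      · intro hx
        have hx' : ¬(x ∈ (C i₁).support ∨ x ∈ (C j).support ∨ x ∈ S.support) :=
          fun h => hx ((hHverts x).mpr h)
        push_neg at hx'
        obtain ⟨h1, h2, h3⟩ := hx'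
        constructor
        · rcases hcover x with h | ⟨i, hi⟩
          · exact h
          · rcases hex i with rfl | rfl
            · exact absurd hi h1
            · exact absurd hi h2
        · intro hxSint
          exact h3 (hSint_sub x hxSint)
    obtain ⟨Npm, hNpm⟩ := induce_hasPM_of_matching hMrem hvc
    refine ⟨H, ⟨⟨A c, hvH⟩, ⟨A d, hwH⟩, liftWalk R1 hR1e hvH hvH,
      liftWalk R2 hR2e hwH hwH, liftWalk S hSe hvH hwH,
      isCycle_liftWalk _ _ _ ((hcyc i₁).1.rotate hc),
      isCycle_liftWalk _ _ _ ((hcyc j).1.rotate hdj), ?_, ?_, ?_, ?_, ?_, ?_, ?_, ?_, ?_⟩,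
      Npm, hNpm⟩
    · rw [length_liftWalk, hR1def, length_rotate']
      exact (hcyc i₁).2
    · rw [length_liftWalk, hR2def, length_rotate']
      exact (hcyc j).2
    · exact isPath_liftWalk _ _ _ _ hSpath
    · rw [length_liftWalk, hSlen]
      exact Nat.odd_iff.mpr hn2
    · intro x hx1 hx2
      exact hCC i₁ j (Ne.symm hji₁) (x : V)
        ((hR1sup _).mp ((mem_support_liftWalk _ _ _ _).mp hx1))
        ((hR2sup _).mp ((mem_support_liftWalk _ _ _ _).mp hx2))
    · intro x hxP hxC
      exact Subtype.ext (hSi₁ (x : V) ((mem_support_liftWalk _ _ _ _).mp hxP)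
        ((hR1sup _).mp ((mem_support_liftWalk _ _ _ _).mp hxC)))
    · intro x hxP hxC
      exact Subtype.ext (hSj (x : V) ((mem_support_liftWalk _ _ _ _).mp hxP)
        ((hR2sup _).mp ((mem_support_liftWalk _ _ _ _).mp hxC)))
    · intro x
      rcases (hHverts (x : V)).mp x.2 with h | h | h
      · exact Or.inl ((mem_support_liftWalk _ _ _ _).mpr ((hR1sup _).mpr h))
      · exact Or.inr (Or.inl ((mem_support_liftWalk _ _ _ _).mpr ((hR2sup _).mpr h)))
      · exact Or.inr (Or.inr ((mem_support_liftWalk _ _ _ _).mpr h))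
    · intro e
      rw [coe_edgeSet_iff, mem_edges_liftWalk, mem_edges_liftWalk, mem_edges_liftWalk]
      exact hHedge _
  · -- more than two cycles: merge two of them and recurse
    push_neg at hex
    obtain ⟨i₂, hi₂a, hi₂b⟩ := hex
    have hSodd : Odd S.length := by rw [hSlen]; exact Nat.odd_iff.mpr hn2
    obtain ⟨MS, hMSm, hMSv⟩ := exists_matching_odd_path S hSpath hSodd
    obtain ⟨N1, hN1m, hN1v⟩ := exists_near_matching_cycle (C i₁) (hcyc i₁).1 (hcyc i₁).2 hc
    obtain ⟨N2, hN2m, hN2v⟩ := exists_near_matching_cycle (C j) (hcyc j).1 (hcyc j).2 hdj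
    have hACS : A c ∈ S.support := (hSsup _).mpr ⟨0, Nat.zero_le _, rfl⟩
    have hADS : A d ∈ S.support := (hSsup _).mpr ⟨n, le_rfl, by congr 1; omega⟩
    -- the new matching
    have hm1 : (M₀.deleteVerts Sint ⊔ MS).IsMatching := by
      refine matching_sup_of_disjoint_verts hMrem hMSm ?_
      rw [Subgraph.deleteVerts_verts, hMSv, Set.disjoint_left]
      rintro x ⟨hxM, hxS⟩ hx2
      rcases hSsub_parts x hx2 with h | h | h
      · exact hMC i₁ x h hxM
      · exact hMC j x h hxM
      · exact hxS h
    have hm1v : (M₀.deleteVerts Sint ⊔ MS).verts =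
        (M₀.verts \ Sint) ∪ {x | x ∈ S.support} := by
      rw [Subgraph.verts_sup, Subgraph.deleteVerts_verts, hMSv]
    have hm2 : (M₀.deleteVerts Sint ⊔ MS ⊔ N1).IsMatching := by
      refine matching_sup_of_disjoint_verts hm1 hN1m ?_
      rw [hm1v, hN1v, Set.disjoint_left]
      rintro x (⟨hxM, -⟩ | hxS) ⟨hx1, hxc⟩
      · exact hMC i₁ x hx1 hxM
      · exact hxc (hSi₁ x hxS hx1)
    have hm2v : (M₀.deleteVerts Sint ⊔ MS ⊔ N1).verts =
        ((M₀.verts \ Sint) ∪ {x | x ∈ S.support}) ∪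
          {x | x ∈ (C i₁).support ∧ x ≠ A c} := by
      rw [Subgraph.verts_sup, hm1v, hN1v]
    have hMnewm : (M₀.deleteVerts Sint ⊔ MS ⊔ N1 ⊔ N2).IsMatching := by
      refine matching_sup_of_disjoint_verts hm2 hN2m ?_
      rw [hm2v, hN2v, Set.disjoint_left]
      rintro x ((⟨hxM, -⟩ | hxS) | ⟨hx1, -⟩) ⟨hx2, hxd⟩
      · exact hMC j x hx2 hxM
      · exact hxd (hSj x hxS hx2)
      · exact hCC i₁ j (Ne.symm hji₁) x hx1 hx2
    have hMnewv : ∀ x, x ∈ (M₀.deleteVerts Sint ⊔ MS ⊔ N1 ⊔ N2).verts ↔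
        ((x ∈ M₀.verts ∧ x ∉ Sint) ∨ x ∈ S.support ∨
          (x ∈ (C i₁).support ∧ x ≠ A c) ∨ (x ∈ (C j).support ∧ x ≠ A d)) := by
      intro x
      rw [Subgraph.verts_sup, hm2v, hN2v]
      simp only [Set.mem_union, Set.mem_diff, Set.mem_setOf_eq, or_assoc]
    -- the new cycle family
    have hk'pos : 0 < Fintype.card {i : Fin k // i ≠ i₁ ∧ i ≠ j} :=
      Fintype.card_pos_iff.mpr ⟨⟨i₂, hi₂a, hi₂b⟩⟩
    have hk'lt : Fintype.card {i : Fin k // i ≠ i₁ ∧ i ≠ j} < k := by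
      have h9 := Fintype.card_subtype_lt (p := fun i : Fin k => i ≠ i₁ ∧ i ≠ j)
        (x := i₁) (by simp)
      simpa using h9
    set e := Fintype.equivFin {i : Fin k // i ≠ i₁ ∧ i ≠ j} with hedef
    refine IH _ hk'lt (fun m => u (e.symm m).1) (fun m => C (e.symm m).1)
      (M₀.deleteVerts Sint ⊔ MS ⊔ N1 ⊔ N2) hk'pos hMnewm (fun m => hcyc _) ?_ ?_ ?_
    · -- pairwise disjoint
      intro m m' hne x hx
      refine hCC (e.symm m).1 (e.symm m').1 ?_ x hx
      intro hval
      exact hne (e.symm.injective (Subtype.ext hval))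
    · -- cycles avoid the new matching
      intro m x hx hmem
      have hx' : x ∈ (C (e.symm m).1).support := hx
      have hii₁ := (e.symm m).2.1
      have hij := (e.symm m).2.2
      rcases (hMnewv x).mp hmem with ⟨hxM, -⟩ | hxS | ⟨hx1, -⟩ | ⟨hx2, -⟩
      · exact hMC (e.symm m).1 x hx' hxM
      · rcases hSsub_parts x hxS with h | h | h
        · exact hCC (e.symm m).1 i₁ hii₁ x hx' h
        · exact hCC (e.symm m).1 j hij x hx' h
        · obtain ⟨m', h1, h2, rfl⟩ := h
          exact hMC (e.symm m).1 _ hx' (hSint_M₀ m' h1 h2)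
      · exact hCC (e.symm m).1 i₁ hii₁ x hx' hx1
      · exact hCC (e.symm m).1 j hij x hx' hx2
    · -- coverage
      intro x
      rcases hcover x with hxM | ⟨i, hi⟩
      · by_cases hxS : x ∈ Sint
        · exact Or.inl ((hMnewv x).mpr (Or.inr (Or.inl (hSint_sub x hxS))))
        · exact Or.inl ((hMnewv x).mpr (Or.inl ⟨hxM, hxS⟩))
      · by_cases hii : i = i₁
        · rw [hii] at hi
          by_cases hxc : x = A c
          · exact Or.inl ((hMnewv x).mpr (Or.inr (Or.inl (hxc ▸ hACS))))
          · exact Or.inl ((hMnewv x).mpr (Or.inr (Or.inr (Or.inl ⟨hi, hxc⟩))))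
        by_cases hij : i = j
        · rw [hij] at hi
          by_cases hxd : x = A d
          · exact Or.inl ((hMnewv x).mpr (Or.inr (Or.inl (hxd ▸ hADS))))
          · exact Or.inl ((hMnewv x).mpr (Or.inr (Or.inr (Or.inr ⟨hi, hxd⟩))))
        · refine Or.inr ⟨e ⟨i, hii, hij⟩, ?_⟩
          have h9 : x ∈ (C ((e.symm (e ⟨i, hii, hij⟩)).1)).support := by
            rw [Equiv.symm_apply_apply]
            exact hi
          exact h9


end EgAux

/-- A graph with a perfect matching is Egerváry iff it does not contain an even
subdivision of `T` as a nice subgraph. -/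
theorem egervary_iff_no_niceEvenSubdivT {V : Type*} [Fintype V] (G : SimpleGraph V)
    (hPM : HasPM G) : IsEgervary G ↔ ¬ HasNiceEvenSubdivT G := by
  constructor
  · intro hEg hNice
    exact hEg (EgAux.hasOddCycleCover_of_nice hNice)
  · intro hNo hCov
    obtain ⟨Mpm, hMpm⟩ := hPM
    obtain ⟨M₀, k, u, C, hk, hM₀, hcyc, hCC, hMC, hcov⟩ := hCov
    exact hNo (EgAux.nice_of_cover_aux Mpm hMpm k u C M₀ hk hM₀ hcyc hCC hMC hcov)
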